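/- The Shapley value of player i, defined as Sh_i = Σ_{S⊆N\{i}} [F(S∪{i}) - F(S)] · |S|!(n-|S|-1)!/n!, equals the integral along the main diagonal of the unit cube of the i-th partial derivative of the multilinear extension: Sh_i = ∫_0^1 ∇_i f_mt(x·𝟏) dx. -/

import Mathlib

open Finset

noncomputable def mlext (n : ℕ) (F : Finset (Fin n) → ℝ) (x : Fin n → ℝ) : ℝ :=
  ∑ S : Finset (Fin n), F S * (∏ i ∈ S, x i) * ∏ j ∈ Sᶜ, (1 - x j)

noncomputable def partialDeriv1 (n : ℕ) (i : Fin n)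
    (f : (Fin n → ℝ) → ℝ) (x : Fin n → ℝ) : ℝ :=
  deriv (fun t => f (Function.update x i t)) (x i)


noncomputable def shapley (n : ℕ) (F : Finset (Fin n) → ℝ) (i : Fin n) : ℝ :=
  ∑ S ∈ (Finset.univ.erase i).powerset,
    (F (insert i S) - F S) *
      ((Nat.factorial S.card * Nat.factorial (n - S.card - 1) : ℝ) / Nat.factorial n)


lemma beta_nat (b : ℕ) : ∀ a : ℕ, (∫ x in (0:ℝ)..1, x ^ a * (1 - x) ^ b)
    = (Nat.factorial a * Nat.factorial b : ℝ) / Nat.factorial (a + b + 1) := by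
  induction b with
  | zero =>
    intro a
    have hne : (a:ℝ) + 1 ≠ 0 := by positivity
    rw [show (Nat.factorial (a + 0 + 1) : ℝ) = (a+1) * Nat.factorial a by
      rw [Nat.add_zero, Nat.factorial_succ]; push_cast; ring]
    have hfa : (Nat.factorial a : ℝ) ≠ 0 := Nat.cast_ne_zero.mpr (Nat.factorial_ne_zero _)
    simp [integral_pow]
    field_simp
  | succ b IH =>
    intro a
    have hu : ∀ x ∈ Set.uIcc (0:ℝ) 1, HasDerivAt (fun x : ℝ => (1 - x) ^ (b + 1))
        (-((b+1 : ℝ) * (1 - x) ^ b)) x := by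
      intro x _
      have h := ((hasDerivAt_id x).const_sub 1).fun_pow (b+1)
      simpa [mul_comm, mul_assoc, mul_left_comm] using h
    have hv : ∀ x ∈ Set.uIcc (0:ℝ) 1, HasDerivAt (fun x : ℝ => x ^ (a+1) / (a+1 : ℝ))
        (x ^ a) x := by
      intro x _
      have h := (hasDerivAt_pow (a+1) x).div_const (a+1 : ℝ)
      have hne : (a+1 : ℝ) ≠ 0 := by positivity
      have : (x : ℝ) ^ a * ((a+1 : ℝ)/(a+1 : ℝ)) = x ^ a := by rw [div_self hne, mul_one]
      rw [← this]
      refine h.congr_deriv ?_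
      push_cast
      ring
    have hint := intervalIntegral.integral_mul_deriv_eq_deriv_mul hu hv
      (by apply Continuous.intervalIntegrable; continuity)
      (by apply Continuous.intervalIntegrable; continuity)
    have h1 : (∫ x in (0:ℝ)..1, (1 - x) ^ (b+1) * x ^ a)
        = (b+1 : ℝ)/(a+1 : ℝ) * ∫ x in (0:ℝ)..1, x ^ (a+1) * (1 - x) ^ b := by
      rw [hint, ← intervalIntegral.integral_const_mul,
        show (∫ x in (0:ℝ)..1, -((b+1 : ℝ) * (1 - x) ^ b) * (x ^ (a+1) / (a+1 : ℝ)))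
          = ∫ x in (0:ℝ)..1, -((b+1 : ℝ)/(a+1 : ℝ) * (x ^ (a+1) * (1 - x) ^ b)) from by
            congr 1; ext x; ring,
        intervalIntegral.integral_neg]
      simp
    have h2 : (∫ x in (0:ℝ)..1, x ^ a * (1 - x) ^ (b+1))
        = (b+1 : ℝ)/(a+1 : ℝ) * ∫ x in (0:ℝ)..1, x ^ (a+1) * (1 - x) ^ b := by
      rw [← h1]; congr 1; ext x; ring
    rw [h2, IH (a+1)]
    have e1 : a + 1 + b + 1 = a + (b+1) + 1 := by ring
    rw [e1]
    rw [Nat.factorial_succ a, Nat.factorial_succ b]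
    push_cast
    have h3 : (a : ℝ) + 1 ≠ 0 := by positivity
    have h4 : (Nat.factorial (a + (b+1) + 1) : ℝ) ≠ 0 :=
      Nat.cast_ne_zero.mpr (Nat.factorial_ne_zero _)
    field_simp


lemma mlext_update (n : ℕ) (F : Finset (Fin n) → ℝ) (i : Fin n) (x t : ℝ) :
    mlext n F (Function.update (fun _ => x) i t) =
      ∑ S ∈ (Finset.univ.erase i).powerset,
        (F (insert i S) * t + F S * (1 - t)) * x ^ S.card * (1 - x) ^ (n - S.card - 1) := by
  classical
  unfold mlext
  set u := Function.update (fun _ : Fin n => x) i t with hu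
  have huniv : (Finset.univ : Finset (Fin n)) = insert i (Finset.univ.erase i) :=
    (Finset.insert_erase (Finset.mem_univ i)).symm
  have hstep : (∑ S : Finset (Fin n), F S * (∏ j ∈ S, u j) * ∏ j ∈ Sᶜ, (1 - u j))
      = ∑ S ∈ (insert i (Finset.univ.erase i)).powerset,
          F S * (∏ j ∈ S, u j) * ∏ j ∈ Sᶜ, (1 - u j) := by
    rw [← huniv, Finset.powerset_univ]
  rw [hstep, Finset.sum_powerset_insert (Finset.notMem_erase i _), ← Finset.sum_add_distrib]
  apply Finset.sum_congr rfl
  intro S hS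
  rw [Finset.mem_powerset] at hS
  have hiS : i ∉ S := fun h => Finset.notMem_erase i _ (hS h)
  have hScard : S.card ≤ n - 1 := by
    have := Finset.card_le_card hS
    simpa [Finset.card_erase_of_mem, Finset.card_univ] using this
  have hn : 1 ≤ n := i.pos
  have hiSc : i ∈ Sᶜ := Finset.mem_compl.mpr hiS
  have hcardc : Sᶜ.card = n - S.card := by
    simp [Finset.card_compl, Finset.card_univ]
  -- products over S
  have hpS : (∏ j ∈ S, u j) = x ^ S.card := by
    rw [Finset.prod_congr rfl (fun j hj => ?_), Finset.prod_const]
    have : j ≠ i := fun h => hiS (h ▸ hj)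
    simp [hu, Function.update_of_ne this]
  have hpSc : (∏ j ∈ Sᶜ, (1 - u j)) = (1 - t) * (1 - x) ^ (n - S.card - 1) := by
    rw [← Finset.mul_prod_erase _ _ hiSc]
    congr 1
    · simp [hu]
    · rw [Finset.prod_congr rfl (fun j hj => ?_), Finset.prod_const,
        Finset.card_erase_of_mem hiSc, hcardc]
      have : j ≠ i := Finset.ne_of_mem_erase hj
      simp [hu, Function.update_of_ne this]
  have hpIns : (∏ j ∈ insert i S, u j) = t * x ^ S.card := by
    rw [Finset.prod_insert hiS, hpS]
    simp [hu]
  have hpInsc : (∏ j ∈ (insert i S)ᶜ, (1 - u j)) = (1 - x) ^ (n - S.card - 1) := by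
    rw [Finset.compl_insert]
    rw [Finset.prod_congr rfl (fun j hj => ?_), Finset.prod_const,
      Finset.card_erase_of_mem hiSc, hcardc]
    have : j ≠ i := Finset.ne_of_mem_erase hj
    simp [hu, Function.update_of_ne this]
  rw [hpS, hpSc, hpIns, hpInsc]
  ring

lemma deriv_mlext (n : ℕ) (F : Finset (Fin n) → ℝ) (i : Fin n) (x : ℝ) :
    partialDeriv1 n i (mlext n F) (fun _ => x) =
      ∑ S ∈ (Finset.univ.erase i).powerset,
        (F (insert i S) - F S) * x ^ S.card * (1 - x) ^ (n - S.card - 1) := by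
  unfold partialDeriv1
  have hfun : (fun t => mlext n F (Function.update (fun _ => x) i t)) =
      fun t => ∑ S ∈ (Finset.univ.erase i).powerset,
        (F (insert i S) * t + F S * (1 - t)) * x ^ S.card * (1 - x) ^ (n - S.card - 1) := by
    funext t; exact mlext_update n F i x t
  rw [hfun]
  have h : HasDerivAt (fun t => ∑ S ∈ (Finset.univ.erase i).powerset,
        (F (insert i S) * t + F S * (1 - t)) * x ^ S.card * (1 - x) ^ (n - S.card - 1))
      (∑ S ∈ (Finset.univ.erase i).powerset,
        (F (insert i S) - F S) * x ^ S.card * (1 - x) ^ (n - S.card - 1)) x := by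
    apply HasDerivAt.fun_sum
    intro S _
    have h1 : HasDerivAt (fun t : ℝ => F (insert i S) * t + F S * (1 - t))
        (F (insert i S) - F S) x := by
      have := (((hasDerivAt_id x).const_mul (F (insert i S))).fun_add
        (((hasDerivAt_id x).const_sub 1).const_mul (F S)))
      simpa [mul_comm, sub_eq_add_neg, mul_neg] using this
    simpa using (h1.mul_const (x ^ S.card)).mul_const ((1 - x) ^ (n - S.card - 1))
  exact h.deriv

theorem stmt3 (n : ℕ) (F : Finset (Fin n) → ℝ) (i : Fin n) :
    shapley n F i = ∫ x in (0:ℝ)..1, partialDeriv1 n i (mlext n F) (fun _ => x) := by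
  have hrw : (fun x : ℝ => partialDeriv1 n i (mlext n F) (fun _ => x)) =
      fun x : ℝ => ∑ S ∈ (Finset.univ.erase i).powerset,
        (F (insert i S) - F S) * x ^ S.card * (1 - x) ^ (n - S.card - 1) := by
    funext x; exact deriv_mlext n F i x
  rw [hrw, intervalIntegral.integral_finset_sum]
  · unfold shapley
    apply Finset.sum_congr rfl
    intro S hS
    rw [Finset.mem_powerset] at hS
    have hScard : S.card ≤ n - 1 := by
      have := Finset.card_le_card hS
      simpa [Finset.card_erase_of_mem, Finset.card_univ] using this
    have hn : 1 ≤ n := i.pos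
    have hsum : S.card + (n - S.card - 1) + 1 = n := by omega
    have : (∫ x in (0:ℝ)..1, (F (insert i S) - F S) * x ^ S.card * (1 - x) ^ (n - S.card - 1))
        = (F (insert i S) - F S) * ∫ x in (0:ℝ)..1, x ^ S.card * (1 - x) ^ (n - S.card - 1) := by
      rw [← intervalIntegral.integral_const_mul]
      congr 1; ext x; ring
    rw [this, beta_nat (n - S.card - 1) S.card, hsum]
  · intro S _
    apply Continuous.intervalIntegrable
    continuity
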